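/- Let n ≥ 3 be an integer and suppose 𝒫_j ≠ 0 for all 1 ≤ j ≤ n−2. Define power series f_0, f_1, …, f_n ∈ K⟦T⟧ by f_0 = X − Y, f_1 = f_0 − X² − (β+1)·X·f_0 + (β²−β−1)·f_0², f_2 = (β²−β)·f_0·f_1 + β³·f_0²·X + f_1 + β²·f_0³, and for 3 ≤ j ≤ n, f_j = (−β³·𝒫_{j−1}·f_0·f_{j−1} − 𝒫_j·f_1·f_{j−2}) / (β²·(β−1)²·𝒫_{j−2}). Then for every j with 0 ≤ j ≤ n one has f_j ≡ 𝒫_{j+1}·T^{3j+2} + 𝒬_{j+1}·T^{3j+3} (mod T^q). -/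

import Mathlib

open PowerSeries

section Aux

variable {K : Type*} [Field K]

/-- Two power series agree in all coefficients below `q`. -/
private def CoeffEq (q : ℕ) (A B : PowerSeries K) : Prop :=
  ∀ k : ℕ, k < q → coeff k A = coeff k B

private theorem CoeffEq.refl (q : ℕ) (A : PowerSeries K) : CoeffEq q A A :=
  fun _ _ => rfl

private theorem CoeffEq.ofEq {q : ℕ} {A B : PowerSeries K} (h : A = B) : CoeffEq q A B := by
  subst h; exact CoeffEq.refl q A

private theorem CoeffEq.trans {q : ℕ} {A B C : PowerSeries K}
    (h1 : CoeffEq q A B) (h2 : CoeffEq q B C) : CoeffEq q A C :=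
  fun k hk => (h1 k hk).trans (h2 k hk)

private theorem CoeffEq.add {q : ℕ} {A A' B B' : PowerSeries K}
    (hA : CoeffEq q A A') (hB : CoeffEq q B B') : CoeffEq q (A + B) (A' + B') := by
  intro k hk
  simp only [map_add, hA k hk, hB k hk]

private theorem CoeffEq.sub {q : ℕ} {A A' B B' : PowerSeries K}
    (hA : CoeffEq q A A') (hB : CoeffEq q B B') : CoeffEq q (A - B) (A' - B') := by
  intro k hk
  simp only [map_sub, hA k hk, hB k hk]

private theorem CoeffEq.mul {q : ℕ} {A A' B B' : PowerSeries K}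
    (hA : CoeffEq q A A') (hB : CoeffEq q B B') : CoeffEq q (A * B) (A' * B') := by
  intro k hk
  rw [coeff_mul, coeff_mul]
  refine Finset.sum_congr rfl fun p hp => ?_
  rw [Finset.HasAntidiagonal.mem_antidiagonal] at hp
  rw [hA p.1 (by omega), hB p.2 (by omega)]

private theorem CoeffEq.pow {q : ℕ} {A A' : PowerSeries K} (m : ℕ)
    (hA : CoeffEq q A A') : CoeffEq q (A ^ m) (A' ^ m) := by
  induction m with
  | zero => simpa using CoeffEq.refl q 1
  | succ m ih =>
    rw [pow_succ, pow_succ]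
    exact ih.mul hA

private theorem h3series (h3 : (3 : K) = 0) : (3 : PowerSeries K) = 0 := by
  rw [← map_ofNat C 3, h3, map_zero]

/-- Exact identity giving `f 1` from `f 0`, with truncated representatives. -/
private theorem E1lemma (β p2 q2 : K) (h3 : (3 : K) = 0)
    (hp2 : p2 = -β ^ 3) (hq2 : q2 = β ^ 4 - β ^ 3 - β ^ 2) :
    C p2 * X ^ 5 + C q2 * X ^ 6
      = (C 1 * X ^ 2 + C β * X ^ 3) - (X + X ^ 2) ^ 2
        - C (β + 1) * (X + X ^ 2) * (C 1 * X ^ 2 + C β * X ^ 3)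
        + C (β ^ 2 - β - 1) * (C 1 * X ^ 2 + C β * X ^ 3) ^ 2 := by
  have h3S : (3 : PowerSeries K) = 0 := h3series h3
  subst hp2 hq2
  simp only [map_sub, map_add, map_mul, map_pow, map_neg, map_one]
  linear_combination ((X : PowerSeries K) ^ 3 + X ^ 4 + C β * X ^ 4 + C β * X ^ 5
    + (C β) ^ 2 * X ^ 5 - (C β) ^ 3 * X ^ 5) * h3S

/-- Exact identity giving `f 2` from `f 0`, `f 1`, with truncated representatives. -/
private theorem E2lemma (β p2 q2 p3 q3 : K) (h3 : (3 : K) = 0)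
    (hp2 : p2 = -β ^ 3) (hq2 : q2 = β ^ 4 - β ^ 3 - β ^ 2)
    (hp3 : p3 = β ^ 3) (hq3 : q3 = β ^ 7 + β ^ 6 + β ^ 5 + β ^ 4) :
    C p3 * X ^ 8 + C q3 * X ^ 9
      = C (β ^ 2 - β) * ((C 1 * X ^ 2 + C β * X ^ 3) * (C p2 * X ^ 5 + C q2 * X ^ 6))
        + C (β ^ 3) * ((C 1 * X ^ 2 + C β * X ^ 3) ^ 2 * (X + X ^ 2))
        + (C p2 * X ^ 5 + C q2 * X ^ 6)
        + C (β ^ 2) * (C 1 * X ^ 2 + C β * X ^ 3) ^ 3 := by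
  have h3S : (3 : PowerSeries K) = 0 := h3series h3
  subst hp2 hq2 hp3 hq3
  simp only [map_sub, map_add, map_mul, map_pow, map_neg, map_one]
  linear_combination (-(C β) ^ 3 * (X : PowerSeries K) ^ 7 - (C β) ^ 4 * X ^ 6
    - (C β) ^ 4 * X ^ 7 - (C β) ^ 4 * X ^ 8 + (C β) ^ 6 * X ^ 9) * h3S

/-- Exact identity for the recursive step `f j`, `j ≥ 3`, with truncated representatives. -/
private theorem EJlemma (i : ℕ) (β pa pb pc pd qb qc qd p2 q2 : K)
    (hp2 : p2 = -β ^ 3) (hq2 : q2 = β ^ 4 - β ^ 3 - β ^ 2)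
    (hA : -β ^ 3 * pb * qc - β ^ 4 * pb * pc + β ^ 3 * pc * qb
        - (β ^ 4 - β ^ 3 - β ^ 2) * (pc * pb) = β ^ 2 * (β - 1) ^ 2 * (pa * pd))
    (hB : -β ^ 4 * pb * qc - (β ^ 4 - β ^ 3 - β ^ 2) * (pc * qb)
        = β ^ 2 * (β - 1) ^ 2 * (pa * qd)) :
    -C (β ^ 3 * pb) * ((C 1 * X ^ 2 + C β * X ^ 3)
        * (C pc * X ^ (3 * i + 8) + C qc * X ^ (3 * i + 9)))
      - C pc * ((C p2 * X ^ 5 + C q2 * X ^ 6)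
        * (C pb * X ^ (3 * i + 5) + C qb * X ^ (3 * i + 6)))
      = C (β ^ 2 * (β - 1) ^ 2 * pa)
        * (C pd * X ^ (3 * i + 11) + C qd * X ^ (3 * i + 12)) := by
  subst hp2 hq2
  have hA' := congrArg C hA
  have hB' := congrArg C hB
  simp only [map_sub, map_add, map_mul, map_pow, map_neg, map_one] at hA' hB' ⊢
  linear_combination hA' * (X : PowerSeries K) ^ (3 * i + 11)
    + hB' * (X : PowerSeries K) ^ (3 * i + 12)

end Aux

/-- Theorem 2.12 (`thm:fi`, power-series form): the recursively defined series
`f_j` satisfy `f_j ≡ 𝒫_{j+1} T^{3j+2} + 𝒬_{j+1} T^{3j+3} (mod T^q)` for `0 ≤ j ≤ n`. -/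
theorem stmt_14 {K : Type*} [Field K] [CharP K 3]
    (t : ℕ) (ht : 1 ≤ t) (q : ℕ) (hq : q = 3 ^ t)
    (β : K) (hβ0 : β ≠ 0) (hβ1 : β ≠ 1)
    (P Q : ℕ → K)
    (hP0 : P 0 = 0) (hP1 : P 1 = 1)
    (hQ0 : Q 0 = (β * (β - 1))⁻¹) (hQ1 : Q 1 = β)
    (hPrec : ∀ j : ℕ, 1 ≤ j → P (j + 1) = -β ^ 3 * P j - (β * (β - 1)) ^ 3 * P (j - 1))
    (hQrec : ∀ j : ℕ, 1 ≤ j → Q (j + 1) = -β ^ 3 * Q j - (β * (β - 1)) ^ 3 * Q (j - 1))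
    (n : ℕ) (hn : 3 ≤ n)
    (hPne : ∀ j : ℕ, 1 ≤ j → j ≤ n - 2 → P j ≠ 0)
    (X Y : PowerSeries K)
    (hX : ∀ k : ℕ, k < q → coeff k X =
      coeff k (PowerSeries.X + PowerSeries.X ^ 2))
    (hY : ∀ k : ℕ, k < q → coeff k Y =
      coeff k (PowerSeries.X - C β * PowerSeries.X ^ 3))
    (f : ℕ → PowerSeries K)
    (hf0 : f 0 = X - Y)
    (hf1 : f 1 = f 0 - X ^ 2 - C (β + 1) * X * f 0 + C (β ^ 2 - β - 1) * f 0 ^ 2)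
    (hf2 : f 2 = C (β ^ 2 - β) * (f 0 * f 1) + C (β ^ 3) * (f 0 ^ 2 * X)
      + f 1 + C (β ^ 2) * f 0 ^ 3)
    (hfj : ∀ j : ℕ, 3 ≤ j → j ≤ n →
      f j = (-C (β ^ 3 * P (j - 1)) * (f 0 * f (j - 1)) - C (P j) * (f 1 * f (j - 2)))
        * (C (β ^ 2 * (β - 1) ^ 2 * P (j - 2)))⁻¹) :
    ∀ j : ℕ, j ≤ n → ∀ k : ℕ, k < q →
      coeff k (f j) =
        coeff k (C (P (j + 1)) * PowerSeries.X ^ (3 * j + 2)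
          + C (Q (j + 1)) * PowerSeries.X ^ (3 * j + 3)) := by
  have h3 : (3 : K) = 0 := by exact_mod_cast CharP.cast_eq_zero K 3
  have hβ1' : β - 1 ≠ 0 := sub_ne_zero.mpr hβ1
  have hββ : β * (β - 1) ≠ 0 := mul_ne_zero hβ0 hβ1'
  have hc : (β * (β - 1)) ^ 3 ≠ 0 := pow_ne_zero 3 hββ
  -- values of P 2, Q 2, P 3, Q 3
  have hP2v : P 2 = -β ^ 3 := by
    have h := hPrec 1 le_rfl
    rw [hP1, hP0] at h
    simpa using h
  have hQ2v : Q 2 = β ^ 4 - β ^ 3 - β ^ 2 := by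
    have h := hQrec 1 le_rfl
    rw [hQ1, hQ0] at h
    have hr : (β * (β - 1)) ^ 3 * (β * (β - 1))⁻¹ = (β * (β - 1)) ^ 2 := by
      field_simp
    rw [hr] at h
    rw [h]
    linear_combination (β ^ 3 - β ^ 4) * h3
  have hP3v : P 3 = β ^ 3 := by
    have h : P 3 = -β ^ 3 * P 2 - (β * (β - 1)) ^ 3 * P 1 := hPrec 2 (by omega)
    rw [hP2v, hP1] at h
    rw [h]
    linear_combination (β ^ 5 - β ^ 4) * h3
  have hQ3v : Q 3 = β ^ 7 + β ^ 6 + β ^ 5 + β ^ 4 := by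
    have h : Q 3 = -β ^ 3 * Q 2 - (β * (β - 1)) ^ 3 * Q 1 := hQrec 2 (by omega)
    rw [hQ2v, hQ1] at h
    rw [h]
    linear_combination (-β ^ 7 + β ^ 6 - β ^ 5) * h3
  -- the key pair of algebraic identities, by induction
  have key : ∀ i : ℕ,
      ((β * (β - 1)) ^ 3 * (-β ^ 3 * P (i + 1) * Q (i + 2) - β ^ 4 * P (i + 1) * P (i + 2)
          + β ^ 3 * P (i + 2) * Q (i + 1) - (β ^ 4 - β ^ 3 - β ^ 2) * (P (i + 2) * P (i + 1)))
        = β ^ 2 * (β - 1) ^ 2 * ((P (i + 2) + β ^ 3 * P (i + 1))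
            * (β ^ 3 * P (i + 2) + (β * (β - 1)) ^ 3 * P (i + 1))))
      ∧ ((β * (β - 1)) ^ 3 * (-β ^ 4 * P (i + 1) * Q (i + 2)
          - (β ^ 4 - β ^ 3 - β ^ 2) * (P (i + 2) * Q (i + 1)))
        = β ^ 2 * (β - 1) ^ 2 * ((P (i + 2) + β ^ 3 * P (i + 1))
            * (β ^ 3 * Q (i + 2) + (β * (β - 1)) ^ 3 * Q (i + 1)))) := by
    intro i
    induction i with
    | zero =>
      simp only [Nat.zero_add]
      rw [hP1, hQ1, hP2v, hQ2v]
      constructor <;> ring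
    | succ m IH =>
      have h1 : P (m + 3) = -β ^ 3 * P (m + 2) - (β * (β - 1)) ^ 3 * P (m + 1) :=
        hPrec (m + 2) (by omega)
      have h2 : Q (m + 3) = -β ^ 3 * Q (m + 2) - (β * (β - 1)) ^ 3 * Q (m + 1) :=
        hQrec (m + 2) (by omega)
      simp only [show m + 1 + 2 = m + 3 from rfl, show m + 1 + 1 = m + 2 from rfl]
      constructor
      · rw [h1, h2]
        linear_combination ((β * (β - 1)) ^ 3) * IH.1 +
          (-2 * β ^ 9 * P (m + 2) * P (m + 1) + β ^ 9 * P (m + 2) ^ 2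
            + 14 * β ^ 10 * P (m + 2) * P (m + 1) - 4 * β ^ 10 * P (m + 2) ^ 2
            - 42 * β ^ 11 * P (m + 2) * P (m + 1) + 6 * β ^ 11 * P (m + 2) ^ 2
            + 70 * β ^ 12 * P (m + 2) * P (m + 1) - 4 * β ^ 12 * P (m + 2) ^ 2
            - 70 * β ^ 13 * P (m + 2) * P (m + 1) + β ^ 13 * P (m + 2) ^ 2
            + 42 * β ^ 14 * P (m + 2) * P (m + 1)
            - 14 * β ^ 15 * P (m + 2) * P (m + 1)
            + 2 * β ^ 16 * P (m + 2) * P (m + 1)) * h3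
      · rw [h1, h2]
        linear_combination ((β * (β - 1)) ^ 3) * IH.2 +
          (-β ^ 9 * P (m + 1) * Q (m + 2) - β ^ 9 * P (m + 2) * Q (m + 1)
            + β ^ 9 * P (m + 2) * Q (m + 2)
            + 7 * β ^ 10 * P (m + 1) * Q (m + 2) + 7 * β ^ 10 * P (m + 2) * Q (m + 1)
            - 4 * β ^ 10 * P (m + 2) * Q (m + 2)
            - 21 * β ^ 11 * P (m + 1) * Q (m + 2) - 21 * β ^ 11 * P (m + 2) * Q (m + 1)
            + 6 * β ^ 11 * P (m + 2) * Q (m + 2)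
            + 35 * β ^ 12 * P (m + 1) * Q (m + 2) + 35 * β ^ 12 * P (m + 2) * Q (m + 1)
            - 4 * β ^ 12 * P (m + 2) * Q (m + 2)
            - 35 * β ^ 13 * P (m + 1) * Q (m + 2) - 35 * β ^ 13 * P (m + 2) * Q (m + 1)
            + β ^ 13 * P (m + 2) * Q (m + 2)
            + 21 * β ^ 14 * P (m + 1) * Q (m + 2) + 21 * β ^ 14 * P (m + 2) * Q (m + 1)
            - 7 * β ^ 15 * P (m + 1) * Q (m + 2) - 7 * β ^ 15 * P (m + 2) * Q (m + 1)
            + β ^ 16 * P (m + 1) * Q (m + 2) + β ^ 16 * P (m + 2) * Q (m + 1)) * h3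
  -- basic congruences
  have cX : CoeffEq q X (PowerSeries.X + PowerSeries.X ^ 2) := fun k hk => hX k hk
  have c0 : CoeffEq q (f 0) (C 1 * PowerSeries.X ^ 2 + C β * PowerSeries.X ^ 3) := by
    intro k hk
    rw [hf0, map_sub, hX k hk, hY k hk, ← map_sub]
    have h : (PowerSeries.X + PowerSeries.X ^ 2)
        - (PowerSeries.X - C β * PowerSeries.X ^ 3)
        = C 1 * PowerSeries.X ^ 2 + C β * PowerSeries.X ^ 3 := by
      rw [map_one]; ring
    rw [h]
  have c1 : CoeffEq q (f 1) (C (P 2) * PowerSeries.X ^ 5 + C (Q 2) * PowerSeries.X ^ 6) := by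
    have step : CoeffEq q (f 1)
        ((C 1 * PowerSeries.X ^ 2 + C β * PowerSeries.X ^ 3)
          - (PowerSeries.X + PowerSeries.X ^ 2) ^ 2
          - C (β + 1) * (PowerSeries.X + PowerSeries.X ^ 2)
            * (C 1 * PowerSeries.X ^ 2 + C β * PowerSeries.X ^ 3)
          + C (β ^ 2 - β - 1)
            * (C 1 * PowerSeries.X ^ 2 + C β * PowerSeries.X ^ 3) ^ 2) := by
      rw [hf1]
      exact ((c0.sub (cX.pow 2)).sub
        (((CoeffEq.refl q _).mul cX).mul c0)).add ((CoeffEq.refl q _).mul (c0.pow 2))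
    exact step.trans (CoeffEq.ofEq (E1lemma β (P 2) (Q 2) h3 hP2v hQ2v).symm)
  have c2 : CoeffEq q (f 2) (C (P 3) * PowerSeries.X ^ 8 + C (Q 3) * PowerSeries.X ^ 9) := by
    have step : CoeffEq q (f 2)
        (C (β ^ 2 - β) * ((C 1 * PowerSeries.X ^ 2 + C β * PowerSeries.X ^ 3)
            * (C (P 2) * PowerSeries.X ^ 5 + C (Q 2) * PowerSeries.X ^ 6))
          + C (β ^ 3) * ((C 1 * PowerSeries.X ^ 2 + C β * PowerSeries.X ^ 3) ^ 2
            * (PowerSeries.X + PowerSeries.X ^ 2))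
          + (C (P 2) * PowerSeries.X ^ 5 + C (Q 2) * PowerSeries.X ^ 6)
          + C (β ^ 2) * (C 1 * PowerSeries.X ^ 2 + C β * PowerSeries.X ^ 3) ^ 3) := by
      rw [hf2]
      exact ((((CoeffEq.refl q _).mul (c0.mul c1)).add
        ((CoeffEq.refl q _).mul ((c0.pow 2).mul cX))).add c1).add
        ((CoeffEq.refl q _).mul (c0.pow 3))
    exact step.trans
      (CoeffEq.ofEq (E2lemma β (P 2) (Q 2) (P 3) (Q 3) h3 hP2v hQ2v hP3v hQ3v).symm)
  -- main strong induction
  intro j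
  induction j using Nat.strong_induction_on with
  | _ j IH =>
  rcases j with _ | _ | _ | i
  · intro _ k hk
    rw [c0 k hk]
    norm_num [hP1, hQ1]
  · intro _ k hk
    rw [c1 k hk]
  · intro _ k hk
    rw [c2 k hk]
  · intro hjn k hk
    show coeff k (f (i + 3)) = coeff k (C (P (i + 3 + 1)) * PowerSeries.X ^ (3 * (i + 3) + 2)
      + C (Q (i + 3 + 1)) * PowerSeries.X ^ (3 * (i + 3) + 3))
    have hle : i + 3 ≤ n := by omega
    have hfe := hfj (i + 3) (by omega) hle
    rw [show i + 3 - 1 = i + 2 from rfl, show i + 3 - 2 = i + 1 from rfl] at hfe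
    have hdK : β ^ 2 * (β - 1) ^ 2 * P (i + 1) ≠ 0 :=
      mul_ne_zero (mul_ne_zero (pow_ne_zero 2 hβ0) (pow_ne_zero 2 hβ1'))
        (hPne (i + 1) (by omega) (by omega))
    -- congruences for f (i+2) and f (i+1) from the inductive hypothesis
    have cm1 : CoeffEq q (f (i + 2))
        (C (P (i + 3)) * PowerSeries.X ^ (3 * i + 8)
          + C (Q (i + 3)) * PowerSeries.X ^ (3 * i + 9)) := by
      intro k' hk'
      have h := IH (i + 2) (by omega) (by omega) k' hk'
      simpa [show i + 2 + 1 = i + 3 from rfl, show 3 * (i + 2) + 2 = 3 * i + 8 from by omega,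
        show 3 * (i + 2) + 3 = 3 * i + 9 from by omega] using h
    have cm2 : CoeffEq q (f (i + 1))
        (C (P (i + 2)) * PowerSeries.X ^ (3 * i + 5)
          + C (Q (i + 2)) * PowerSeries.X ^ (3 * i + 6)) := by
      intro k' hk'
      have h := IH (i + 1) (by omega) (by omega) k' hk'
      simpa [show i + 1 + 1 = i + 2 from rfl, show 3 * (i + 1) + 2 = 3 * i + 5 from by omega,
        show 3 * (i + 1) + 3 = 3 * i + 6 from by omega] using h
    -- the algebraic identities at this index
    have hA : -β ^ 3 * P (i + 2) * Q (i + 3) - β ^ 4 * P (i + 2) * P (i + 3)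
        + β ^ 3 * P (i + 3) * Q (i + 2) - (β ^ 4 - β ^ 3 - β ^ 2) * (P (i + 3) * P (i + 2))
        = β ^ 2 * (β - 1) ^ 2 * (P (i + 1) * P (i + 4)) := by
      have hk' : (β * (β - 1)) ^ 3 * (-β ^ 3 * P (i + 2) * Q (i + 3)
          - β ^ 4 * P (i + 2) * P (i + 3) + β ^ 3 * P (i + 3) * Q (i + 2)
          - (β ^ 4 - β ^ 3 - β ^ 2) * (P (i + 3) * P (i + 2)))
          = β ^ 2 * (β - 1) ^ 2 * ((P (i + 3) + β ^ 3 * P (i + 2))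
            * (β ^ 3 * P (i + 3) + (β * (β - 1)) ^ 3 * P (i + 2))) := (key (i + 1)).1
      have h1 : P (i + 3) = -β ^ 3 * P (i + 2) - (β * (β - 1)) ^ 3 * P (i + 1) :=
        hPrec (i + 2) (by omega)
      have h2 : P (i + 4) = -β ^ 3 * P (i + 3) - (β * (β - 1)) ^ 3 * P (i + 2) :=
        hPrec (i + 3) (by omega)
      apply mul_left_cancel₀ hc
      linear_combination hk'
        + (β ^ 2 * (β - 1) ^ 2 * (β ^ 3 * P (i + 3) + (β * (β - 1)) ^ 3 * P (i + 2))) * h1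
        + (-(β * (β - 1)) ^ 3 * β ^ 2 * (β - 1) ^ 2 * P (i + 1)) * h2
    have hB : -β ^ 4 * P (i + 2) * Q (i + 3) - (β ^ 4 - β ^ 3 - β ^ 2) * (P (i + 3) * Q (i + 2))
        = β ^ 2 * (β - 1) ^ 2 * (P (i + 1) * Q (i + 4)) := by
      have hk' : (β * (β - 1)) ^ 3 * (-β ^ 4 * P (i + 2) * Q (i + 3)
          - (β ^ 4 - β ^ 3 - β ^ 2) * (P (i + 3) * Q (i + 2)))
          = β ^ 2 * (β - 1) ^ 2 * ((P (i + 3) + β ^ 3 * P (i + 2))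
            * (β ^ 3 * Q (i + 3) + (β * (β - 1)) ^ 3 * Q (i + 2))) := (key (i + 1)).2
      have h1 : P (i + 3) = -β ^ 3 * P (i + 2) - (β * (β - 1)) ^ 3 * P (i + 1) :=
        hPrec (i + 2) (by omega)
      have h2 : Q (i + 4) = -β ^ 3 * Q (i + 3) - (β * (β - 1)) ^ 3 * Q (i + 2) :=
        hQrec (i + 3) (by omega)
      apply mul_left_cancel₀ hc
      linear_combination hk'
        + (β ^ 2 * (β - 1) ^ 2 * (β ^ 3 * Q (i + 3) + (β * (β - 1)) ^ 3 * Q (i + 2))) * h1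
        + (-(β * (β - 1)) ^ 3 * β ^ 2 * (β - 1) ^ 2 * P (i + 1)) * h2
    -- congruence for the numerator
    have cN : CoeffEq q
        (-C (β ^ 3 * P (i + 2)) * (f 0 * f (i + 2)) - C (P (i + 3)) * (f 1 * f (i + 1)))
        (-C (β ^ 3 * P (i + 2)) * ((C 1 * PowerSeries.X ^ 2 + C β * PowerSeries.X ^ 3)
            * (C (P (i + 3)) * PowerSeries.X ^ (3 * i + 8)
              + C (Q (i + 3)) * PowerSeries.X ^ (3 * i + 9)))
          - C (P (i + 3)) * ((C (P 2) * PowerSeries.X ^ 5 + C (Q 2) * PowerSeries.X ^ 6)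
            * (C (P (i + 2)) * PowerSeries.X ^ (3 * i + 5)
              + C (Q (i + 2)) * PowerSeries.X ^ (3 * i + 6)))) :=
      ((CoeffEq.refl q _).mul (c0.mul cm1)).sub ((CoeffEq.refl q _).mul (c1.mul cm2))
    have EJ := EJlemma i β (P (i + 1)) (P (i + 2)) (P (i + 3)) (P (i + 4)) (Q (i + 2))
      (Q (i + 3)) (Q (i + 4)) (P 2) (Q 2) hP2v hQ2v hA hB
    rw [hfe, PowerSeries.C_inv, coeff_mul_C, cN k hk, EJ, coeff_C_mul]
    rw [show i + 3 + 1 = i + 4 from rfl, show 3 * (i + 3) + 2 = 3 * i + 11 from by omega,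
      show 3 * (i + 3) + 3 = 3 * i + 12 from by omega]
    rw [mul_right_comm, mul_inv_cancel₀ hdK, one_mul]
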